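/- Let r > 0, μ ≠ 0, let k ≥ 2 be an integer, and let s₁, …, s_{k−1} ∈ (0,1) be pairwise distinct. Set E_j = e^{rμ(1−s_j)} − 1 for j = 1, …, k−1, and E₀ = e^{rμ} − 1. Then k·|E₀|·∫₀^∞ (1+θ|E₀|)^{−2} ∏_{i=1}^{k−1} (1 − 1/(1+θ|E_i|)) dθ = k·∏_{i=1}^{k−1} E_i/(E_i−E₀) + k·∑_{j=1}^{k−1} (E₀E_j/(E_j−E₀)²)·(∏_{1≤i≤k−1, i≠j} E_i/(E_i−E_j))·log(E₀/E_j). -/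

import Mathlib

open MeasureTheory Real Filter Topology

namespace NCST

variable (a : ℕ → ℝ)

noncomputable def coA (t : Finset ℕ) : ℝ := a 0 * ∏ i ∈ t, a i / (a i - a 0)

noncomputable def coC (t : Finset ℕ) (j : ℕ) : ℝ :=
  -(a 0) * (a j) ^ 2 / (a j - a 0) ^ 2 * ∏ i ∈ t.erase j, a i / (a i - a j)

noncomputable def coB (t : Finset ℕ) : ℝ :=
  if t = ∅ then 0 else -coA a t - ∑ j ∈ t, coC a t j

theorem pointwise : ∀ t : Finset ℕ, 0 ∉ t →
    (∀ i ∈ insert 0 t, 0 < a i) →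
    (∀ i ∈ insert 0 t, ∀ j ∈ insert 0 t, i ≠ j → a i ≠ a j) →
    ∀ θ : ℝ, 1 + θ * a 0 ≠ 0 → (∀ i ∈ t, 1 + θ * a i ≠ 0) →
    a 0 * ((1 + θ * a 0) ^ 2)⁻¹ * ∏ i ∈ t, (θ * a i * (1 + θ * a i)⁻¹)
      = coA a t * ((1 + θ * a 0) ^ 2)⁻¹ + coB a t * (1 + θ * a 0)⁻¹
        + ∑ j ∈ t, coC a t j * (1 + θ * a j)⁻¹ := by
  intro t
  induction t using Finset.induction_on with
  | empty => intro _ _ _ θ hθ0 _; simp [coA, coB]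
  | @insert m t hm ih =>
    intro h0 hpos hne θ hθ0 hθ
    have hm0 : m ≠ 0 := by rintro rfl; exact h0 (Finset.mem_insert_self _ _)
    have h0t : 0 ∉ t := fun h => h0 (Finset.mem_insert_of_mem h)
    have hsub : ∀ i ∈ insert 0 t, i ∈ insert 0 (insert m t) := by
      intro i hi
      rcases Finset.mem_insert.1 hi with h | h
      · exact Finset.mem_insert.2 (Or.inl h)
      · exact Finset.mem_insert.2 (Or.inr (Finset.mem_insert_of_mem h))
    have hpos' : ∀ i ∈ insert 0 t, 0 < a i := fun i hi => hpos i (hsub i hi)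
    have hne' : ∀ i ∈ insert 0 t, ∀ j ∈ insert 0 t, i ≠ j → a i ≠ a j :=
      fun i hi j hj => hne i (hsub i hi) j (hsub j hj)
    have ha0 : 0 < a 0 := hpos 0 (Finset.mem_insert_self _ _)
    have hmm : m ∈ insert 0 (insert m t) := by simp
    have ham : 0 < a m := hpos m hmm
    have ham0 : a m ≠ 0 := ne_of_gt ham
    have hma0 : a m - a 0 ≠ 0 := sub_ne_zero.2 (hne m hmm 0 (by simp) hm0)
    have hait : ∀ i ∈ t, a i - a m ≠ 0 := by
      intro i hi
      have hineq : i ≠ m := by rintro rfl; exact hm hi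
      exact sub_ne_zero.2 (hne i (by simp [hi]) m hmm hineq)
    have hmat : ∀ i ∈ t, a m - a i ≠ 0 := by
      intro i hi
      exact sub_ne_zero.2 (Ne.symm (sub_ne_zero.1 (hait i hi)))
    have hθm : 1 + θ * a m ≠ 0 := hθ m (Finset.mem_insert_self _ _)
    have hθt : ∀ i ∈ t, 1 + θ * a i ≠ 0 := fun i hi => hθ i (Finset.mem_insert_of_mem hi)
    set θ₀ : ℝ := -(a m)⁻¹ with hθ₀def
    have e00 : 1 + θ₀ * a 0 = (a m - a 0) / a m := by
      rw [hθ₀def]; field_simp; ring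
    have e0m : ∀ i ∈ t, 1 + θ₀ * a i = (a m - a i) / a m := by
      intro i hi; rw [hθ₀def]; field_simp; ring
    have hθ₀0 : 1 + θ₀ * a 0 ≠ 0 := by rw [e00]; exact div_ne_zero hma0 ham0
    have hθ₀t : ∀ i ∈ t, 1 + θ₀ * a i ≠ 0 := by
      intro i hi; rw [e0m i hi]; exact div_ne_zero (hmat i hi) ham0
    have Eq2 := ih h0t hpos' hne' θ₀ hθ₀0 hθ₀t
    have ee0 : ((1 + θ₀ * a 0) ^ 2)⁻¹ = a m ^ 2 / (a m - a 0) ^ 2 := by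
      rw [e00, div_pow, inv_div]
    have ee0' : (1 + θ₀ * a 0)⁻¹ = a m / (a m - a 0) := by rw [e00, inv_div]
    have eej : ∀ j ∈ t, (1 + θ₀ * a j)⁻¹ = a m / (a m - a j) := by
      intro j hj; rw [e0m j hj, inv_div]
    have eprod : ∏ i ∈ t, (θ₀ * a i * (1 + θ₀ * a i)⁻¹) = ∏ i ∈ t, a i / (a i - a m) := by
      refine Finset.prod_congr rfl fun i hi => ?_
      rw [eej i hi, hθ₀def]
      field_simp [hmat i hi, hait i hi]
      ring
    have esum : ∑ j ∈ t, coC a t j * (1 + θ₀ * a j)⁻¹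
        = ∑ j ∈ t, coC a t j * (a m / (a m - a j)) :=
      Finset.sum_congr rfl fun j hj => by rw [eej j hj]
    rw [ee0, ee0', eprod, esum] at Eq2
    have hCm : coC a (insert m t) m
        = -(coA a t * (a m ^ 2 / (a m - a 0) ^ 2) + coB a t * (a m / (a m - a 0))
            + ∑ j ∈ t, coC a t j * (a m / (a m - a j))) := by
      rw [coC, Finset.erase_insert hm, ← Eq2]
      ring
    have hA : coA a (insert m t) = coA a t * (a m / (a m - a 0)) := by
      rw [coA, coA, Finset.prod_insert hm]; ring
    have hCj : ∀ j ∈ t, coC a (insert m t) j = coC a t j * (a m / (a m - a j)) := by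
      intro j hj
      have hmj : m ≠ j := by rintro rfl; exact hm hj
      rw [coC, coC, Finset.erase_insert_of_ne hmj,
        Finset.prod_insert (fun h => hm (Finset.mem_of_mem_erase h))]
      ring
    have hsum2 : ∑ j ∈ t, coC a (insert m t) j * (1 + θ * a j)⁻¹
        = ∑ j ∈ t, coC a t j * (a m / (a m - a j)) * (1 + θ * a j)⁻¹ :=
      Finset.sum_congr rfl fun j hj => by rw [hCj j hj]
    have hB : coB a (insert m t)
        = coA a t * (a 0 * a m / (a m - a 0) ^ 2) + coB a t * (a m / (a m - a 0)) := by
      rw [coB, if_neg (Finset.insert_ne_empty m t), Finset.sum_insert hm, hA, hCm,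
        Finset.sum_congr rfl (fun j hj => hCj j hj)]
      field_simp
      ring
    have Eq1 := ih h0t hpos' hne' θ hθ0 hθt
    rw [Finset.prod_insert hm]
    have lhs1 : a 0 * ((1 + θ * a 0) ^ 2)⁻¹
          * (θ * a m * (1 + θ * a m)⁻¹ * ∏ i ∈ t, (θ * a i * (1 + θ * a i)⁻¹))
        = a 0 * ((1 + θ * a 0) ^ 2)⁻¹ * (∏ i ∈ t, (θ * a i * (1 + θ * a i)⁻¹))
            * (θ * a m * (1 + θ * a m)⁻¹) := by ring
    rw [lhs1, Eq1, Finset.sum_insert hm, hA, hB, hCm, hsum2]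
    have hsum : (∑ j ∈ t, coC a t j * (1 + θ * a j)⁻¹) * (θ * a m * (1 + θ * a m)⁻¹)
        = ∑ j ∈ t, coC a t j * (a m / (a m - a j)) * (1 + θ * a j)⁻¹
          - (∑ j ∈ t, coC a t j * (a m / (a m - a j))) * (1 + θ * a m)⁻¹ := by
      rw [Finset.sum_mul, Finset.sum_mul, ← Finset.sum_sub_distrib]
      refine Finset.sum_congr rfl fun j hj => ?_
      have h1 := hθt j hj
      have h2 := hmat j hj
      field_simp
      ring
    have key : ∀ c1 c2 : ℝ,
        (c1 * ((1 + θ * a 0) ^ 2)⁻¹ + c2 * (1 + θ * a 0)⁻¹) * (θ * a m * (1 + θ * a m)⁻¹)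
          = c1 * (a m / (a m - a 0)) * ((1 + θ * a 0) ^ 2)⁻¹
            + (c1 * (a 0 * a m / (a m - a 0) ^ 2) + c2 * (a m / (a m - a 0))) * (1 + θ * a 0)⁻¹
            - (c1 * (a m ^ 2 / (a m - a 0) ^ 2) + c2 * (a m / (a m - a 0)))
                * (1 + θ * a m)⁻¹ := by
      intro c1 c2
      field_simp
      ring
    linear_combination key (coA a t) (coB a t) + hsum

theorem base3 {c : ℝ} (hc : 0 < c) :
    Tendsto (fun θ : ℝ => (1 + θ * c)⁻¹) atTop (𝓝 0) := by
  apply Filter.Tendsto.inv_tendsto_atTop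
  exact tendsto_atTop_add_const_left _ 1 (Tendsto.atTop_mul_const hc tendsto_id)

theorem base1 {c : ℝ} (hc : 0 < c) :
    Tendsto (fun θ : ℝ => θ * (1 + θ * c)⁻¹) atTop (𝓝 c⁻¹) := by
  have h1 : Tendsto (fun θ : ℝ => (θ⁻¹ + c)⁻¹) atTop (𝓝 c⁻¹) := by
    have h := (tendsto_inv_atTop_zero (𝕜 := ℝ)).add (tendsto_const_nhds (x := c))
    rw [zero_add] at h
    exact h.inv₀ (ne_of_gt hc)
  refine Tendsto.congr' ?_ h1
  filter_upwards [eventually_gt_atTop (0 : ℝ)] with θ hθ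
  have hθ0 : θ ≠ 0 := ne_of_gt hθ
  have hden : 1 + θ * c ≠ 0 := by nlinarith [mul_pos hθ hc]
  field_simp

theorem base2 {c : ℝ} (hc : 0 < c) :
    Tendsto (fun θ : ℝ => θ * ((1 + θ * c) ^ 2)⁻¹) atTop (𝓝 0) := by
  have h1 : Tendsto (fun θ : ℝ => (θ⁻¹ + c)⁻¹) atTop (𝓝 c⁻¹) := by
    have h := (tendsto_inv_atTop_zero (𝕜 := ℝ)).add (tendsto_const_nhds (x := c))
    rw [zero_add] at h
    exact h.inv₀ (ne_of_gt hc)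
  have h2 : Tendsto (fun θ : ℝ => θ⁻¹ * ((θ⁻¹ + c)⁻¹) ^ 2) atTop (𝓝 (0 * (c⁻¹) ^ 2)) :=
    (tendsto_inv_atTop_zero (𝕜 := ℝ)).mul (h1.pow 2)
  rw [zero_mul] at h2
  refine Tendsto.congr' ?_ h2
  filter_upwards [eventually_gt_atTop (0 : ℝ)] with θ hθ
  have hθ0 : θ ≠ 0 := ne_of_gt hθ
  have hden : 1 + θ * c ≠ 0 := by nlinarith [mul_pos hθ hc]
  field_simp

theorem sumzero (t : Finset ℕ) (h0 : 0 ∉ t)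
    (hpos : ∀ i ∈ insert 0 t, 0 < a i)
    (hne : ∀ i ∈ insert 0 t, ∀ j ∈ insert 0 t, i ≠ j → a i ≠ a j) :
    coB a t / a 0 + ∑ j ∈ t, coC a t j / a j = 0 := by
  have ha0 : 0 < a 0 := hpos 0 (by simp)
  have hpt : ∀ i ∈ t, 0 < a i := fun i hi => hpos i (by simp [hi])
  have hmain : ∀ θ : ℝ, 0 < θ → ∀ i ∈ insert 0 t, (0:ℝ) < 1 + θ * a i := by
    intro θ hθ i hi
    nlinarith [mul_pos hθ (hpos i hi)]
  -- limit of θ * LHS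
  have hprod : Tendsto (fun θ : ℝ => ∏ i ∈ t, (θ * a i * (1 + θ * a i)⁻¹)) atTop
      (𝓝 (∏ i ∈ t, (1:ℝ))) := by
    refine tendsto_finset_prod t fun i hi => ?_
    have h := (base1 (hpt i hi)).const_mul (a i)
    have h' : Tendsto (fun θ : ℝ => θ * a i * (1 + θ * a i)⁻¹) atTop
        (𝓝 (a i * (a i)⁻¹)) := h.congr fun θ => by ring
    rw [mul_inv_cancel₀ (ne_of_gt (hpt i hi))] at h'
    exact h'
  have hf : Tendsto (fun θ : ℝ =>
      θ * (a 0 * ((1 + θ * a 0) ^ 2)⁻¹ * ∏ i ∈ t, (θ * a i * (1 + θ * a i)⁻¹))) atTop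
      (𝓝 0) := by
    have h := ((base2 ha0).const_mul (a 0)).mul hprod
    have h' : Tendsto (fun θ : ℝ =>
        θ * (a 0 * ((1 + θ * a 0) ^ 2)⁻¹ * ∏ i ∈ t, (θ * a i * (1 + θ * a i)⁻¹))) atTop
        (𝓝 (a 0 * 0 * ∏ i ∈ t, (1:ℝ))) := h.congr fun θ => by ring
    simpa using h'
  have hg : Tendsto (fun θ : ℝ =>
      θ * (coA a t * ((1 + θ * a 0) ^ 2)⁻¹ + coB a t * (1 + θ * a 0)⁻¹
        + ∑ j ∈ t, coC a t j * (1 + θ * a j)⁻¹)) atTop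
      (𝓝 (coB a t / a 0 + ∑ j ∈ t, coC a t j / a j)) := by
    have t1 := (base2 ha0).const_mul (coA a t)
    have t2 := (base1 ha0).const_mul (coB a t)
    have t3 := tendsto_finset_sum t fun j hj => (base1 (hpt j hj)).const_mul (coC a t j)
    have h := (t1.add t2).add t3
    have h' : Tendsto (fun θ : ℝ =>
        θ * (coA a t * ((1 + θ * a 0) ^ 2)⁻¹ + coB a t * (1 + θ * a 0)⁻¹
          + ∑ j ∈ t, coC a t j * (1 + θ * a j)⁻¹)) atTop
        (𝓝 (coA a t * 0 + coB a t * (a 0)⁻¹ + ∑ j ∈ t, coC a t j * (a j)⁻¹)) := by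
      refine h.congr fun θ => ?_
      rw [mul_add, mul_add, Finset.mul_sum,
        Finset.sum_congr rfl (fun j (hj : j ∈ t) =>
          mul_left_comm θ (coC a t j) ((1 + θ * a j)⁻¹))]
      ring
    have he : coA a t * 0 + coB a t * (a 0)⁻¹ + ∑ j ∈ t, coC a t j * (a j)⁻¹
        = coB a t / a 0 + ∑ j ∈ t, coC a t j / a j := by
      rw [Finset.sum_congr rfl (fun j (hj : j ∈ t) =>
        show coC a t j * (a j)⁻¹ = coC a t j / a j from (div_eq_mul_inv _ _).symm)]
      rw [div_eq_mul_inv]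
      ring
    rw [he] at h'
    exact h'
  have heq : (fun θ : ℝ =>
      θ * (a 0 * ((1 + θ * a 0) ^ 2)⁻¹ * ∏ i ∈ t, (θ * a i * (1 + θ * a i)⁻¹))) =ᶠ[atTop]
      (fun θ : ℝ =>
      θ * (coA a t * ((1 + θ * a 0) ^ 2)⁻¹ + coB a t * (1 + θ * a 0)⁻¹
        + ∑ j ∈ t, coC a t j * (1 + θ * a j)⁻¹)) := by
    filter_upwards [eventually_gt_atTop (0 : ℝ)] with θ hθ
    rw [pointwise a t h0 hpos hne θ (ne_of_gt (hmain θ hθ 0 (by simp)))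
      (fun i hi => ne_of_gt (hmain θ hθ i (by simp [hi])))]
  have := tendsto_nhds_unique (hf.congr' heq) hg
  linarith

theorem core (t : Finset ℕ) (h0 : 0 ∉ t)
    (hpos : ∀ i ∈ insert 0 t, 0 < a i)
    (hne : ∀ i ∈ insert 0 t, ∀ j ∈ insert 0 t, i ≠ j → a i ≠ a j) :
    ∫ θ in Set.Ioi (0:ℝ),
        a 0 * (((1 + θ * a 0) ^ 2)⁻¹ * ∏ i ∈ t, (1 - 1 / (1 + θ * a i)))
      = ∏ i ∈ t, a i / (a i - a 0)
        + ∑ j ∈ t, (a 0 * a j / (a j - a 0) ^ 2) *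
            (∏ i ∈ t.erase j, a i / (a i - a j)) * Real.log (a 0 / a j) := by
  have ha0 : 0 < a 0 := hpos 0 (by simp)
  have hpt : ∀ i ∈ t, 0 < a i := fun i hi => hpos i (by simp [hi])
  have hj0 : ∀ j ∈ t, a j - a 0 ≠ 0 := by
    intro j hj
    refine sub_ne_zero.2 (hne j (by simp [hj]) 0 (by simp) ?_)
    rintro rfl; exact h0 hj
  have hpos1 : ∀ θ : ℝ, 0 ≤ θ → ∀ i ∈ insert 0 t, (0:ℝ) < 1 + θ * a i := by
    intro θ hθ i hi
    nlinarith [mul_nonneg hθ (le_of_lt (hpos i hi))]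
  set G : ℝ → ℝ := fun θ => -(coA a t / a 0) * (1 + θ * a 0)⁻¹
      + (coB a t / a 0) * Real.log (1 + θ * a 0)
      + ∑ j ∈ t, (coC a t j / a j) * Real.log (1 + θ * a j) with hGdef
  have hderivf : ∀ θ ∈ Set.Ici (0:ℝ), HasDerivAt G
      (a 0 * (((1 + θ * a 0) ^ 2)⁻¹ * ∏ i ∈ t, (1 - 1 / (1 + θ * a i)))) θ := by
    intro θ hθ
    have hθ' : (0:ℝ) ≤ θ := hθ
    have hne0 : 1 + θ * a 0 ≠ 0 := ne_of_gt (hpos1 θ hθ' 0 (by simp))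
    have hnej : ∀ j ∈ t, 1 + θ * a j ≠ 0 :=
      fun j hj => ne_of_gt (hpos1 θ hθ' j (by simp [hj]))
    have hlin : ∀ c : ℝ, HasDerivAt (fun x : ℝ => 1 + x * c) c θ := by
      intro c; simpa using ((hasDerivAt_id θ).mul_const c).const_add 1
    have d1 : HasDerivAt (fun x : ℝ => -(coA a t / a 0) * (1 + x * a 0)⁻¹)
        (-(coA a t / a 0) * (-(a 0) / (1 + θ * a 0) ^ 2)) θ :=
      ((hlin (a 0)).inv hne0).const_mul _
    have d2 : HasDerivAt (fun x : ℝ => (coB a t / a 0) * Real.log (1 + x * a 0))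
        ((coB a t / a 0) * (a 0 / (1 + θ * a 0))) θ :=
      ((hlin (a 0)).log hne0).const_mul _
    have d3 : HasDerivAt (fun x : ℝ => ∑ j ∈ t, (coC a t j / a j) * Real.log (1 + x * a j))
        (∑ j ∈ t, (coC a t j / a j) * (a j / (1 + θ * a j))) θ :=
      HasDerivAt.fun_sum fun j hj => ((hlin (a j)).log (hnej j hj)).const_mul _
    have hD := (d1.add d2).add d3
    have hval : a 0 * (((1 + θ * a 0) ^ 2)⁻¹ * ∏ i ∈ t, (1 - 1 / (1 + θ * a i)))
        = -(coA a t / a 0) * (-(a 0) / (1 + θ * a 0) ^ 2)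
          + (coB a t / a 0) * (a 0 / (1 + θ * a 0))
          + ∑ j ∈ t, (coC a t j / a j) * (a j / (1 + θ * a j)) := by
      have hL : a 0 * (((1 + θ * a 0) ^ 2)⁻¹ * ∏ i ∈ t, (1 - 1 / (1 + θ * a i)))
          = a 0 * ((1 + θ * a 0) ^ 2)⁻¹ * ∏ i ∈ t, (θ * a i * (1 + θ * a i)⁻¹) := by
        rw [Finset.prod_congr rfl (fun i (hi : i ∈ t) =>
          show (1 - 1 / (1 + θ * a i)) = θ * a i * (1 + θ * a i)⁻¹ from by
            field_simp [hnej i hi]; ring)]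
        ring
      rw [hL, pointwise a t h0 hpos hne θ hne0 hnej]
      rw [Finset.sum_congr rfl (fun j (hj : j ∈ t) =>
        show coC a t j * (1 + θ * a j)⁻¹ = (coC a t j / a j) * (a j / (1 + θ * a j)) from by
          rw [div_mul_div_comm, mul_comm (coC a t j) (a j), mul_div_mul_left _ _ (ne_of_gt (hpt j hj)), div_eq_mul_inv])]
      have e1 : -(coA a t / a 0) * (-(a 0) / (1 + θ * a 0) ^ 2)
          = coA a t * ((1 + θ * a 0) ^ 2)⁻¹ := by
        field_simp
      have e2 : (coB a t / a 0) * (a 0 / (1 + θ * a 0)) = coB a t * (1 + θ * a 0)⁻¹ := by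
        field_simp
      rw [e1, e2]
    rw [hval]
    exact hD
  have hnn : ∀ θ ∈ Set.Ioi (0:ℝ), 0 ≤
      a 0 * (((1 + θ * a 0) ^ 2)⁻¹ * ∏ i ∈ t, (1 - 1 / (1 + θ * a i))) := by
    intro θ hθ
    have hθ' : (0:ℝ) ≤ θ := le_of_lt hθ
    refine mul_nonneg (le_of_lt ha0) (mul_nonneg (by positivity) (Finset.prod_nonneg ?_))
    intro i hi
    have h1 : (0:ℝ) < 1 + θ * a i := hpos1 θ hθ' i (by simp [hi])
    have h2 : 1 / (1 + θ * a i) ≤ 1 := by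
      rw [div_le_one h1]
      nlinarith [mul_nonneg hθ' (le_of_lt (hpt i hi))]
    linarith
  -- limit at infinity
  have hinvc : ∀ c : ℝ, 0 < c → Tendsto (fun θ : ℝ => θ⁻¹ + c) atTop (𝓝 c) := by
    intro c hc
    have h := (tendsto_inv_atTop_zero (𝕜 := ℝ)).add (tendsto_const_nhds (x := c))
    rwa [zero_add] at h
  have hz := sumzero a t h0 hpos hne
  have hG1 : Tendsto (fun θ : ℝ => -(coA a t / a 0) * (1 + θ * a 0)⁻¹) atTop
      (𝓝 (-(coA a t / a 0) * 0)) := (base3 ha0).const_mul _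
  have hG2 : Tendsto (fun θ : ℝ => (coB a t / a 0) * Real.log (θ⁻¹ + a 0)) atTop
      (𝓝 ((coB a t / a 0) * Real.log (a 0))) :=
    ((hinvc (a 0) ha0).log (ne_of_gt ha0)).const_mul _
  have hG3 : Tendsto (fun θ : ℝ => ∑ j ∈ t, (coC a t j / a j) * Real.log (θ⁻¹ + a j)) atTop
      (𝓝 (∑ j ∈ t, (coC a t j / a j) * Real.log (a j))) :=
    tendsto_finset_sum t fun j hj =>
      ((hinvc (a j) (hpt j hj)).log (ne_of_gt (hpt j hj))).const_mul _
  have hH := (hG1.add hG2).add hG3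
  have hGH : (fun θ : ℝ => -(coA a t / a 0) * (1 + θ * a 0)⁻¹
      + (coB a t / a 0) * Real.log (θ⁻¹ + a 0)
      + ∑ j ∈ t, (coC a t j / a j) * Real.log (θ⁻¹ + a j)) =ᶠ[atTop] G := by
    filter_upwards [eventually_gt_atTop (0:ℝ)] with θ hθ
    have hθ0 : θ ≠ 0 := ne_of_gt hθ
    have hsplit : ∀ c : ℝ, 0 < c → Real.log (1 + θ * c) = Real.log θ + Real.log (θ⁻¹ + c) := by
      intro c hc
      rw [show (1 + θ * c) = θ * (θ⁻¹ + c) by field_simp, Real.log_mul hθ0 (by positivity)]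
    have hsplitsum : ∑ j ∈ t, (coC a t j / a j) * Real.log (1 + θ * a j)
        = ∑ j ∈ t, (coC a t j / a j) * (Real.log θ + Real.log (θ⁻¹ + a j)) :=
      Finset.sum_congr rfl fun j hj => by rw [hsplit (a j) (hpt j hj)]
    have hs1 : ∑ j ∈ t, (coC a t j / a j) * (Real.log θ + Real.log (θ⁻¹ + a j))
        = (∑ j ∈ t, coC a t j / a j) * Real.log θ
          + ∑ j ∈ t, (coC a t j / a j) * Real.log (θ⁻¹ + a j) := by
      rw [Finset.sum_mul, ← Finset.sum_add_distrib]
      exact Finset.sum_congr rfl fun j hj => by ring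
    rw [hGdef]
    show _ = -(coA a t / a 0) * (1 + θ * a 0)⁻¹
      + (coB a t / a 0) * Real.log (1 + θ * a 0)
      + ∑ j ∈ t, (coC a t j / a j) * Real.log (1 + θ * a j)
    rw [hsplit (a 0) ha0, hsplitsum, hs1]
    linear_combination (-(Real.log θ)) * hz
  have htendG : Tendsto G atTop
      (𝓝 (-(coA a t / a 0) * 0 + (coB a t / a 0) * Real.log (a 0)
        + ∑ j ∈ t, (coC a t j / a j) * Real.log (a j))) :=
    Tendsto.congr' hGH hH
  have key := MeasureTheory.integral_Ioi_of_hasDerivAt_of_nonneg' hderivf hnn htendG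
  have hG0 : G 0 = -(coA a t / a 0) := by
    rw [hGdef]; simp
  rw [key, hG0]
  have hA0 : coA a t / a 0 = ∏ i ∈ t, a i / (a i - a 0) := by
    rw [coA, mul_comm, mul_div_assoc, div_self (ne_of_gt ha0), mul_one]
  have hBlog : coB a t / a 0 = -∑ j ∈ t, coC a t j / a j := by linarith [hz]
  rw [hBlog, hA0]
  have hsum : (-∑ j ∈ t, coC a t j / a j) * Real.log (a 0)
      + ∑ j ∈ t, (coC a t j / a j) * Real.log (a j)
      = ∑ j ∈ t, (a 0 * a j / (a j - a 0) ^ 2) *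
          (∏ i ∈ t.erase j, a i / (a i - a j)) * Real.log (a 0 / a j) := by
    have e : (-∑ j ∈ t, coC a t j / a j) * Real.log (a 0)
        + ∑ j ∈ t, (coC a t j / a j) * Real.log (a j)
        = ∑ j ∈ t, ((coC a t j / a j) * Real.log (a j)
            - (coC a t j / a j) * Real.log (a 0)) := by
      rw [Finset.sum_sub_distrib, neg_mul, Finset.sum_mul]; ring
    rw [e]
    refine Finset.sum_congr rfl fun j hj => ?_
    have hc : coC a t j / a j
        = -(a 0 * a j / (a j - a 0) ^ 2 * ∏ i ∈ t.erase j, a i / (a i - a j)) := by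
      rw [coC, div_eq_iff (ne_of_gt (hpt j hj))]
      ring
    rw [hc, Real.log_div (ne_of_gt ha0) (ne_of_gt (hpt j hj))]
    ring
  rw [← hsum]
  ring


end NCST

/-- The near-critical scaling limit (Theorem 2.3), distribution function form: with
`E j = e^{rμ(1−s_j)} − 1` (and `s 0 = 0`, so `E 0 = e^{rμ} − 1`), for pairwise distinct
`s₁, …, s_{k−1} ∈ (0,1)`,
`k|E₀| ∫₀^∞ (1+θ|E₀|)⁻² ∏_{i=1}^{k−1}(1 − 1/(1+θ|Eᵢ|)) dθ
  = k ∏_{i=1}^{k−1} Eᵢ/(Eᵢ−E₀)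
    + k ∑_{j=1}^{k−1} (E₀E_j/(E_j−E₀)²)(∏_{i≠j} Eᵢ/(Eᵢ−E_j)) log(E₀/E_j)`. -/
theorem nearcritical_split_time_distribution
    (r μ : ℝ) (hr : 0 < r) (hμ : μ ≠ 0) (k : ℕ) (hk : 2 ≤ k)
    (s : ℕ → ℝ) (hs0 : s 0 = 0)
    (hs : ∀ i ∈ Finset.Ico 1 k, s i ∈ Set.Ioo (0 : ℝ) 1)
    (hdist : ∀ i ∈ Finset.Ico 1 k, ∀ j ∈ Finset.Ico 1 k, i ≠ j → s i ≠ s j)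
    (E : ℕ → ℝ) (hE : ∀ j, E j = Real.exp (r * μ * (1 - s j)) - 1) :
    (k : ℝ) * |E 0| *
        ∫ θ in Set.Ioi (0 : ℝ),
          ((1 + θ * |E 0|) ^ 2)⁻¹ * ∏ i ∈ Finset.Ico 1 k, (1 - 1 / (1 + θ * |E i|))
      = (k : ℝ) * ∏ i ∈ Finset.Ico 1 k, E i / (E i - E 0)
        + (k : ℝ) * ∑ j ∈ Finset.Ico 1 k,
            (E 0 * E j / (E j - E 0) ^ 2) *
              (∏ i ∈ (Finset.Ico 1 k).erase j, E i / (E i - E j)) *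
                Real.log (E 0 / E j) := by
  have h0t : (0:ℕ) ∉ Finset.Ico 1 k := by simp
  have hrμ : r * μ ≠ 0 := mul_ne_zero (ne_of_gt hr) hμ
  have hsrange : ∀ i ∈ insert 0 (Finset.Ico 1 k), 0 ≤ s i ∧ s i < 1 := by
    intro i hi
    rcases Finset.mem_insert.1 hi with rfl | h
    · rw [hs0]; exact ⟨le_refl 0, one_pos⟩
    · exact ⟨le_of_lt (hs i h).1, (hs i h).2⟩
  have hsne : ∀ i ∈ insert 0 (Finset.Ico 1 k), ∀ j ∈ insert 0 (Finset.Ico 1 k),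
      i ≠ j → s i ≠ s j := by
    intro i hi j hj hij
    rcases Finset.mem_insert.1 hi with rfl | h
    · rcases Finset.mem_insert.1 hj with rfl | h'
      · exact absurd rfl hij
      · rw [hs0]; exact ne_of_gt (hs j h').1 |>.symm
    · rcases Finset.mem_insert.1 hj with rfl | h'
      · rw [hs0]; exact ne_of_gt (hs i h).1
      · exact hdist i h j h' hij
  have hx0 : ∀ i ∈ insert 0 (Finset.Ico 1 k), r * μ * (1 - s i) ≠ 0 := by
    intro i hi
    exact mul_ne_zero hrμ (sub_ne_zero.2 (ne_of_gt (hsrange i hi).2))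
  have hE0 : ∀ i ∈ insert 0 (Finset.Ico 1 k), E i ≠ 0 := by
    intro i hi
    rw [hE i]
    refine sub_ne_zero.2 fun hc => hx0 i hi ?_
    have hc' : Real.exp (r * μ * (1 - s i)) = Real.exp 0 := by rw [Real.exp_zero]; exact hc
    rwa [Real.exp_eq_exp] at hc'
  have hEne : ∀ i ∈ insert 0 (Finset.Ico 1 k), ∀ j ∈ insert 0 (Finset.Ico 1 k),
      i ≠ j → E i ≠ E j := by
    intro i hi j hj hij hc
    rw [hE i, hE j, sub_left_inj, Real.exp_eq_exp] at hc
    have := mul_left_cancel₀ hrμ hc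
    exact hsne i hi j hj hij (by linarith)
  obtain ⟨ε, hε1, hEa⟩ : ∃ ε : ℝ, (ε = 1 ∨ ε = -1) ∧
      ∀ i ∈ insert 0 (Finset.Ico 1 k), E i = ε * |E i| := by
    rcases hμ.lt_or_gt with hμneg | hμpos
    · refine ⟨-1, Or.inr rfl, fun i hi => ?_⟩
      have hxi : r * μ * (1 - s i) < 0 :=
        mul_neg_of_neg_of_pos (mul_neg_of_pos_of_neg hr hμneg)
          (by linarith [(hsrange i hi).2])
      have h1 : Real.exp (r * μ * (1 - s i)) < Real.exp 0 := Real.exp_lt_exp.2 hxi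
      rw [Real.exp_zero] at h1
      have hEneg : E i < 0 := by rw [hE i]; linarith
      rw [abs_of_neg hEneg]; ring
    · refine ⟨1, Or.inl rfl, fun i hi => ?_⟩
      have hxi : 0 < r * μ * (1 - s i) :=
        mul_pos (mul_pos hr hμpos) (by linarith [(hsrange i hi).2])
      have h1 : Real.exp 0 < Real.exp (r * μ * (1 - s i)) := Real.exp_lt_exp.2 hxi
      rw [Real.exp_zero] at h1
      have : 0 < E i := by rw [hE i]; linarith
      rw [one_mul, abs_of_pos this]
  have hapos : ∀ i ∈ insert 0 (Finset.Ico 1 k), 0 < |E i| :=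
    fun i hi => abs_pos.2 (hE0 i hi)
  have hane : ∀ i ∈ insert 0 (Finset.Ico 1 k), ∀ j ∈ insert 0 (Finset.Ico 1 k),
      i ≠ j → |E i| ≠ |E j| := by
    intro i hi j hj hij hc
    exact hEne i hi j hj hij (by rw [hEa i hi, hEa j hj, hc])
  have hcore : (∫ θ in Set.Ioi (0:ℝ),
      |E 0| * (((1 + θ * |E 0|) ^ 2)⁻¹ * ∏ i ∈ Finset.Ico 1 k, (1 - 1 / (1 + θ * |E i|))))
      = ∏ i ∈ Finset.Ico 1 k, |E i| / (|E i| - |E 0|)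
        + ∑ j ∈ Finset.Ico 1 k, (|E 0| * |E j| / (|E j| - |E 0|) ^ 2) *
            (∏ i ∈ (Finset.Ico 1 k).erase j, |E i| / (|E i| - |E j|)) *
              Real.log (|E 0| / |E j|) :=
    NCST.core (fun i => |E i|) (Finset.Ico 1 k) h0t hapos hane
  have hratio : ∀ x y : ℝ, (ε * x) / (ε * x - ε * y) = x / (x - y) := by
    intro x y
    rcases hε1 with rfl | rfl
    · rw [one_mul, one_mul]
    · rw [show (-1:ℝ) * x - -1 * y = -(x - y) by ring,
        show (-1:ℝ) * x = -x by ring, neg_div_neg_eq]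
  have hratio2 : ∀ x y : ℝ, (ε * x) * (ε * y) / (ε * y - ε * x) ^ 2
      = x * y / (y - x) ^ 2 := by
    intro x y
    rcases hε1 with rfl | rfl
    · norm_num
    · rw [show (-1:ℝ) * y - -1 * x = -(y - x) by ring, neg_sq,
        show ((-1:ℝ) * x) * ((-1:ℝ) * y) = x * y by ring]
  have hratio3 : ∀ x y : ℝ, (ε * x) / (ε * y) = x / y := by
    intro x y
    rcases hε1 with rfl | rfl
    · rw [one_mul, one_mul]
    · rw [show (-1:ℝ) * x = -x by ring, show (-1:ℝ) * y = -y by ring, neg_div_neg_eq]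
  have hpair : ∀ i ∈ insert 0 (Finset.Ico 1 k), ∀ j ∈ insert 0 (Finset.Ico 1 k),
      E i / (E i - E j) = |E i| / (|E i| - |E j|) := by
    intro i hi j hj
    have h := hratio |E i| |E j|
    rw [← hEa i hi, ← hEa j hj] at h
    exact h
  have hprodE : ∏ i ∈ Finset.Ico 1 k, E i / (E i - E 0)
      = ∏ i ∈ Finset.Ico 1 k, |E i| / (|E i| - |E 0|) :=
    Finset.prod_congr rfl fun i hi =>
      hpair i (Finset.mem_insert_of_mem hi) 0 (Finset.mem_insert_self _ _)
  have hsumE : ∑ j ∈ Finset.Ico 1 k, (E 0 * E j / (E j - E 0) ^ 2) *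
        (∏ i ∈ (Finset.Ico 1 k).erase j, E i / (E i - E j)) * Real.log (E 0 / E j)
      = ∑ j ∈ Finset.Ico 1 k, (|E 0| * |E j| / (|E j| - |E 0|) ^ 2) *
        (∏ i ∈ (Finset.Ico 1 k).erase j, |E i| / (|E i| - |E j|)) *
          Real.log (|E 0| / |E j|) := by
    refine Finset.sum_congr rfl fun j hj => ?_
    have hj' : j ∈ insert 0 (Finset.Ico 1 k) := Finset.mem_insert_of_mem hj
    have hz' : (0:ℕ) ∈ insert 0 (Finset.Ico 1 k) := Finset.mem_insert_self _ _
    have h1 : E 0 * E j / (E j - E 0) ^ 2 = |E 0| * |E j| / (|E j| - |E 0|) ^ 2 := by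
      have h := hratio2 |E 0| |E j|
      rw [← hEa 0 hz', ← hEa j hj'] at h
      exact h
    have h2 : (∏ i ∈ (Finset.Ico 1 k).erase j, E i / (E i - E j))
        = ∏ i ∈ (Finset.Ico 1 k).erase j, |E i| / (|E i| - |E j|) :=
      Finset.prod_congr rfl fun i hi =>
        hpair i (Finset.mem_insert_of_mem (Finset.mem_of_mem_erase hi)) j hj'
    have h3 : Real.log (E 0 / E j) = Real.log (|E 0| / |E j|) := by
      have h := hratio3 |E 0| |E j|
      rw [← hEa 0 hz', ← hEa j hj'] at h
      rw [h]
    rw [h1, h2, h3]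
  rw [hprodE, hsumE, mul_assoc, ← MeasureTheory.integral_const_mul, hcore]
  ring
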